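/- Suppose the latent distribution Q satisfies instrument exogeneity and generalized monotonicity with maximally encouraging value z*(d) for each d ∈ 𝒟, Q rationalizes P (P = Q∘T^{-1}), and P{Z = z} > 0 for all z ∈ 𝒵. Then for each d ∈ 𝒟, E_Q[Y_d] lies in the closed interval [β_{d|z*(d)} + y^L(1 − Σ_{y∈𝒴} p_{yd|z*(d)}), β_{d|z*(d)} + y^U(1 − Σ_{y∈𝒴} p_{yd|z*(d)})]. -/

import Mathlib

open Finset

/-- A probability mass function on a finite type. -/
structure ProbMass (α : Type) [Fintype α] where
  mass : α → ℝ
  nonneg : ∀ a, 0 ≤ mass a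
  total : ∑ a, mass a = 1

/-- Probability of an event under a probability mass function. -/
noncomputable def pr {α : Type} [Fintype α] (Q : ProbMass α) (A : Set α) : ℝ :=
  ∑ a, A.indicator Q.mass a

/-- Expectation of a real-valued function under a probability mass function. -/
noncomputable def expect {α : Type} [Fintype α] (Q : ProbMass α) (f : α → ℝ) : ℝ :=
  ∑ a, Q.mass a * f a

/-- The latent space: potential outcomes `(Y_d)_{d ∈ D}` taking values in the finite set
`𝒴 ⊂ ℝ`, potential treatments `(D_z)_{z ∈ Z}`, and the instrument `Z`. -/
abbrev Latent (𝒴 : Finset ℝ) (D Z : Type) : Type := (D → ↥𝒴) × (Z → D) × Z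

/-- The observed space: `(Y, D, Z)`. -/
abbrev Obs (𝒴 : Finset ℝ) (D Z : Type) : Type := ↥𝒴 × D × Z

variable {𝒴 : Finset ℝ} {D Z : Type} [Fintype D] [DecidableEq D] [Fintype Z] [DecidableEq Z]

/-- The map `T` sending `((y_d), (d_z), z)` to `(y_{d_z}, d_z, z)`. -/
def Tmap (ω : Latent 𝒴 D Z) : Obs 𝒴 D Z := (ω.1 (ω.2.1 ω.2.2), ω.2.1 ω.2.2, ω.2.2)

/-- `Q` rationalizes `P`: `P = Q ∘ T⁻¹`. -/
def Rationalizes (Q : ProbMass (Latent 𝒴 D Z)) (P : ProbMass (Obs 𝒴 D Z)) : Prop :=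
  ∀ o : Obs 𝒴 D Z, P.mass o = pr Q {ω | Tmap ω = o}

/-- Instrument exogeneity: `((Y_d), (D_z))` is independent of `Z` under `Q`. -/
def Exog (Q : ProbMass (Latent 𝒴 D Z)) : Prop :=
  ∀ (yd : D → ↥𝒴) (dz : Z → D) (z : Z),
    pr Q {ω | ω.1 = yd ∧ ω.2.1 = dz ∧ ω.2.2 = z}
      = pr Q {ω | ω.1 = yd ∧ ω.2.1 = dz} * pr Q {ω | ω.2.2 = z}

/-- `zs` maximally encourages treatment `d` under `Q`:
`Q{D_{zs} ≠ d and D_{z'} = d for some z'} = 0`. -/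
def MaxEnc (Q : ProbMass (Latent 𝒴 D Z)) (d : D) (zs : Z) : Prop :=
  pr Q {ω | ω.2.1 zs ≠ d ∧ ∃ z' : Z, ω.2.1 z' = d} = 0

/-- Generalized monotonicity. -/
def GenMono (Q : ProbMass (Latent 𝒴 D Z)) : Prop :=
  ∀ d : D, ∃ zs : Z, MaxEnc Q d zs

/-- `θ(Q) = (E_Q[Y_d])_{d ∈ D}`, the vector of average potential outcomes. -/
noncomputable def theta (Q : ProbMass (Latent 𝒴 D Z)) : D → ℝ :=
  fun d => expect Q fun ω => (ω.1 d : ℝ)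

/-- `𝐐₀(P, 𝐐)`: the set of `Q ∈ 𝐐` that rationalize `P`. -/
def Q0 (P : ProbMass (Obs 𝒴 D Z)) (QQ : Set (ProbMass (Latent 𝒴 D Z))) :
    Set (ProbMass (Latent 𝒴 D Z)) :=
  {Q | Q ∈ QQ ∧ Rationalizes Q P}

/-- `Θ₀(P, 𝐐)`: the identified set for `θ(Q)`. -/
noncomputable def Theta0 (P : ProbMass (Obs 𝒴 D Z))
    (QQ : Set (ProbMass (Latent 𝒴 D Z))) : Set (D → ℝ) :=
  theta '' Q0 P QQ

/-- Unrestricted potential outcomes: if `Q ∈ 𝐐`, `Q'` is exogenous, and the potential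
treatments have the same distribution under `Q'` as under `Q`, then `Q' ∈ 𝐐`. -/
def UnrestrictedPO (QQ : Set (ProbMass (Latent 𝒴 D Z))) : Prop :=
  ∀ Q ∈ QQ, ∀ Q' : ProbMass (Latent 𝒴 D Z), Exog Q' →
    (∀ dz : Z → D, pr Q' {ω | ω.2.1 = dz} = pr Q {ω | ω.2.1 = dz}) → Q' ∈ QQ

/-- `P{Z = z}`. -/
noncomputable def prZ (P : ProbMass (Obs 𝒴 D Z)) (z : Z) : ℝ :=
  pr P {o | o.2.2 = z}

/-- `P{D = d ∣ Z = z}`. -/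
noncomputable def condD (P : ProbMass (Obs 𝒴 D Z)) (d : D) (z : Z) : ℝ :=
  pr P {o | o.2.1 = d ∧ o.2.2 = z} / prZ P z

/-- `p_{yd|z} = P{Y = y, D = d ∣ Z = z}`. -/
noncomputable def pObs (P : ProbMass (Obs 𝒴 D Z)) (y : ℝ) (d : D) (z : Z) : ℝ :=
  pr P {o | (o.1 : ℝ) = y ∧ o.2.1 = d ∧ o.2.2 = z} / prZ P z

/-- `β_{d|z} = E_P[Y · 1{D = d} ∣ Z = z]`. -/
noncomputable def betaObs (P : ProbMass (Obs 𝒴 D Z)) (d : D) (z : Z) : ℝ :=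
  (expect P fun o => if o.2.1 = d ∧ o.2.2 = z then (o.1 : ℝ) else 0) / prZ P z
open scoped Classical

lemma pr_setOf {α : Type} [Fintype α] (Q : ProbMass α) (p : α → Prop) [DecidablePred p] :
    pr Q {a | p a} = ∑ a, if p a then Q.mass a else 0 := by
  unfold pr
  refine Finset.sum_congr rfl fun a _ => ?_
  rw [Set.indicator_apply]
  split_ifs with h1 h2 h2 <;> simp_all [Set.mem_setOf_eq]

lemma expect_push (Q : ProbMass (Latent 𝒴 D Z)) (P : ProbMass (Obs 𝒴 D Z))
    (hR : Rationalizes Q P) (f : Obs 𝒴 D Z → ℝ) :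
    _root_.expect P f = ∑ ω : Latent 𝒴 D Z, Q.mass ω * f (Tmap ω) := by
  unfold _root_.expect
  have h : ∀ o : Obs 𝒴 D Z, P.mass o * f o
      = ∑ ω : Latent 𝒴 D Z, if Tmap ω = o then Q.mass ω * f o else 0 := by
    intro o
    rw [hR o, pr_setOf Q (fun ω => Tmap ω = o), Finset.sum_mul]
    refine Finset.sum_congr rfl fun ω _ => ?_
    split_ifs <;> simp
  refine Eq.trans (Finset.sum_congr rfl fun o _ => h o) ?_
  rw [Finset.sum_comm]
  refine Finset.sum_congr rfl fun ω _ => ?_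
  rw [Finset.sum_ite_eq]
  simp

lemma pr_push (Q : ProbMass (Latent 𝒴 D Z)) (P : ProbMass (Obs 𝒴 D Z))
    (hR : Rationalizes Q P) (p : Obs 𝒴 D Z → Prop) [DecidablePred p] :
    pr P {o | p o} = ∑ ω : Latent 𝒴 D Z, if p (Tmap ω) then Q.mass ω else 0 := by
  have h := expect_push Q P hR (fun o => if p o then (1:ℝ) else 0)
  unfold _root_.expect at h
  simp only [mul_ite, mul_one, mul_zero] at h
  rw [pr_setOf P p]
  exact h

lemma pr_single (Q : ProbMass (Latent 𝒴 D Z)) (yd : D → ↥𝒴) (dz : Z → D) (z : Z) :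
    pr Q {ω : Latent 𝒴 D Z | ω.1 = yd ∧ ω.2.1 = dz ∧ ω.2.2 = z} = Q.mass (yd, dz, z) := by
  rw [pr_setOf Q (fun ω => ω.1 = yd ∧ ω.2.1 = dz ∧ ω.2.2 = z),
    Finset.sum_eq_single (yd, dz, z)]
  · simp
  · rintro ⟨a, b, c⟩ - hne
    rw [if_neg]
    rintro ⟨h1, h2, h3⟩
    exact hne (by simp_all)
  · simp

lemma pr_marg (Q : ProbMass (Latent 𝒴 D Z)) (yd : D → ↥𝒴) (dz : Z → D) :
    pr Q {ω : Latent 𝒴 D Z | ω.1 = yd ∧ ω.2.1 = dz} = ∑ z', Q.mass (yd, dz, z') := by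
  rw [pr_setOf Q (fun ω => ω.1 = yd ∧ ω.2.1 = dz)]
  have h : ∀ ω : Latent 𝒴 D Z,
      (if ω.1 = yd ∧ ω.2.1 = dz then Q.mass ω else 0)
      = ∑ z', if ω.1 = yd ∧ ω.2.1 = dz ∧ ω.2.2 = z' then Q.mass ω else 0 := by
    intro ω
    by_cases h : ω.1 = yd ∧ ω.2.1 = dz
    · obtain ⟨h1, h2⟩ := h
      simp [h1, h2, Finset.sum_ite_eq]
    · rw [if_neg h]
      refine (Finset.sum_eq_zero ?_).symm
      intro z' _
      rw [if_neg]
      rintro ⟨h1, h2, -⟩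
      exact h ⟨h1, h2⟩
  refine Eq.trans (Finset.sum_congr rfl fun ω _ => h ω) ?_
  rw [Finset.sum_comm]
  refine Finset.sum_congr rfl fun z' _ => ?_
  rw [← pr_setOf Q (fun ω => ω.1 = yd ∧ ω.2.1 = dz ∧ ω.2.2 = z'), pr_single]

lemma exog_sum (Q : ProbMass (Latent 𝒴 D Z)) (hE : Exog Q)
    (f : (D → ↥𝒴) → (Z → D) → ℝ) (z : Z) :
    ∑ ω : Latent 𝒴 D Z, (if ω.2.2 = z then Q.mass ω * f ω.1 ω.2.1 else 0)
      = pr Q {ω : Latent 𝒴 D Z | ω.2.2 = z} * ∑ ω : Latent 𝒴 D Z, Q.mass ω * f ω.1 ω.2.1 := by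
  have key : ∀ (yd : D → ↥𝒴) (dz : Z → D), Q.mass (yd, dz, z)
      = (∑ z', Q.mass (yd, dz, z')) * pr Q {ω : Latent 𝒴 D Z | ω.2.2 = z} := by
    intro yd dz
    have h := hE yd dz z
    rwa [pr_single, pr_marg] at h
  have L : ∑ ω : Latent 𝒴 D Z, (if ω.2.2 = z then Q.mass ω * f ω.1 ω.2.1 else 0)
      = ∑ yd, ∑ dz, Q.mass (yd, dz, z) * f yd dz := by
    rw [Fintype.sum_prod_type]
    refine Finset.sum_congr rfl fun yd _ => ?_
    rw [Fintype.sum_prod_type]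
    refine Finset.sum_congr rfl fun dz _ => ?_
    rw [Finset.sum_ite_eq']
    simp
  have R : ∑ ω : Latent 𝒴 D Z, Q.mass ω * f ω.1 ω.2.1
      = ∑ yd, ∑ dz, (∑ z', Q.mass (yd, dz, z')) * f yd dz := by
    rw [Fintype.sum_prod_type]
    refine Finset.sum_congr rfl fun yd _ => ?_
    rw [Fintype.sum_prod_type]
    refine Finset.sum_congr rfl fun dz _ => ?_
    rw [Finset.sum_mul]
  rw [L, R, Finset.mul_sum]
  refine Finset.sum_congr rfl fun yd _ => ?_
  rw [Finset.mul_sum]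
  refine Finset.sum_congr rfl fun dz _ => ?_
  rw [key yd dz]
  ring

/-- validity of the bounds: if `Q` satisfies instrument exogeneity and
generalized monotonicity with maximally encouraging values `z*(d)` and rationalizes `P`, then
`E_Q[Y_d]` lies in the interval
`[β_{d|z*(d)} + y^L(1 − Σ_y p_{yd|z*(d)}), β_{d|z*(d)} + y^U(1 − Σ_y p_{yd|z*(d)})]`. -/
theorem avg_potential_outcome_in_bounds
    (𝒴 : Finset ℝ) (h𝒴 : 2 ≤ 𝒴.card)
    (D Z : Type) [Fintype D] [DecidableEq D] [Nontrivial D]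
    [Fintype Z] [DecidableEq Z] [Nontrivial Z]
    (Q : ProbMass (Latent 𝒴 D Z)) (P : ProbMass (Obs 𝒴 D Z))
    (hE : Exog Q)
    (zstar : D → Z)
    (hM : ∀ d : D, MaxEnc Q d (zstar d))
    (hR : Rationalizes Q P)
    (hP : ∀ z : Z, 0 < prZ P z) :
    ∀ d : D, theta Q d ∈ Set.Icc
      (betaObs P d (zstar d)
        + 𝒴.min' (Finset.card_pos.mp (by omega)) * (1 - ∑ y ∈ 𝒴, pObs P y d (zstar d)))
      (betaObs P d (zstar d)
        + 𝒴.max' (Finset.card_pos.mp (by omega)) * (1 - ∑ y ∈ 𝒴, pObs P y d (zstar d))) := by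
  intro d
  set z : Z := zstar d with hzdef
  have hc : 0 < prZ P z := hP z
  -- prZ P z equals the Q-probability of {Z = z}
  have hcQ : pr Q {ω : Latent 𝒴 D Z | ω.2.2 = z} = prZ P z := by
    unfold prZ
    rw [pr_push Q P hR (fun o => o.2.2 = z), pr_setOf Q (fun ω => ω.2.2 = z)]
    rfl
  set S1 : ℝ := ∑ ω : Latent 𝒴 D Z, Q.mass ω * (if ω.2.1 z = d then ((ω.1 d : ℝ)) else 0)
    with hS1
  set S2 : ℝ := ∑ ω : Latent 𝒴 D Z, Q.mass ω * (if ω.2.1 z = d then 0 else ((ω.1 d : ℝ)))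
    with hS2
  set q : ℝ := ∑ ω : Latent 𝒴 D Z, Q.mass ω * (if ω.2.1 z = d then (1:ℝ) else 0) with hq
  -- beta = S1
  have hbeta : betaObs P d z = S1 := by
    unfold betaObs
    rw [expect_push Q P hR]
    have hpt : ∀ ω : Latent 𝒴 D Z,
        Q.mass ω * (if (Tmap ω).2.1 = d ∧ (Tmap ω).2.2 = z then ((Tmap ω).1 : ℝ) else 0)
        = if ω.2.2 = z then Q.mass ω * (if ω.2.1 z = d then ((ω.1 d : ℝ)) else 0) else 0 := by
      intro ω
      show Q.mass ω * (if ω.2.1 ω.2.2 = d ∧ ω.2.2 = z then ((ω.1 (ω.2.1 ω.2.2) : ℝ)) else 0) = _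
      by_cases h1 : ω.2.2 = z
      · by_cases h2 : ω.2.1 z = d
        · rw [if_pos (show ω.2.1 ω.2.2 = d ∧ ω.2.2 = z from ⟨by rw [h1, h2], h1⟩), if_pos h1, if_pos h2, h1, h2]
        · rw [if_neg (show ¬(ω.2.1 ω.2.2 = d ∧ ω.2.2 = z) by rw [h1]; exact fun h => h2 h.1), if_pos h1, if_neg h2, mul_zero]
      · rw [if_neg (show ¬(ω.2.1 ω.2.2 = d ∧ ω.2.2 = z) from fun h => h1 h.2), if_neg h1, mul_zero]
    rw [Finset.sum_congr rfl fun ω _ => hpt ω,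
      exog_sum Q hE (fun yd dz => if dz z = d then ((yd d : ℝ)) else 0) z, hcQ, ← hS1,
      mul_comm, mul_div_assoc, div_self hc.ne', mul_one]
  -- sum of pObs = q
  have hsump : ∑ y ∈ 𝒴, pObs P y d z = q := by
    unfold pObs
    rw [← Finset.sum_div]
    have h1 : ∑ y ∈ 𝒴, pr P {o : Obs 𝒴 D Z | (o.1 : ℝ) = y ∧ o.2.1 = d ∧ o.2.2 = z}
        = ∑ ω : Latent 𝒴 D Z, (if ω.2.2 = z then Q.mass ω * (if ω.2.1 z = d then (1:ℝ) else 0) else 0) := by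
      refine Eq.trans (Finset.sum_congr rfl fun y _ =>
        pr_push Q P hR (fun o => (o.1 : ℝ) = y ∧ o.2.1 = d ∧ o.2.2 = z)) ?_
      rw [Finset.sum_comm]
      refine Finset.sum_congr rfl fun ω _ => ?_
      simp only [Tmap]
      by_cases hz : ω.2.2 = z
      · by_cases hd : ω.2.1 z = d
        · have hdd : ω.2.1 ω.2.2 = d := by rw [hz, hd]
          have hmem : ((ω.1 (ω.2.1 ω.2.2) : ℝ)) ∈ 𝒴 := (ω.1 (ω.2.1 ω.2.2)).2
          rw [if_pos hz, if_pos hd, mul_one]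
          trans (∑ y ∈ 𝒴, if ((ω.1 (ω.2.1 ω.2.2) : ℝ)) = y then Q.mass ω else 0)
          · exact Finset.sum_congr rfl fun y hy => if_congr (by simp [hz, hd]) rfl rfl
          · rw [Finset.sum_ite_eq 𝒴 ((ω.1 (ω.2.1 ω.2.2) : ℝ)) (fun _ => Q.mass ω),
              if_pos hmem]
        · have hdd : ¬ (ω.2.1 ω.2.2 = d) := by rw [hz]; exact hd
          rw [if_pos hz, if_neg hd, mul_zero]
          refine Finset.sum_eq_zero fun y _ => if_neg ?_
          rintro ⟨-, h2, -⟩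
          exact hdd h2
      · rw [if_neg hz]
        refine Finset.sum_eq_zero fun y _ => if_neg ?_
        rintro ⟨-, -, h3⟩
        exact hz h3
    rw [h1, exog_sum Q hE (fun yd dz => if dz z = d then (1:ℝ) else 0) z, hcQ, ← hq,
      mul_comm, mul_div_assoc, div_self hc.ne', mul_one]
  -- theta = S1 + S2
  have htheta : theta Q d = S1 + S2 := by
    unfold theta _root_.expect
    rw [hS1, hS2, ← Finset.sum_add_distrib]
    refine Finset.sum_congr rfl fun ω _ => ?_
    by_cases h : ω.2.1 z = d
    · rw [if_pos h, if_pos h, mul_zero, add_zero]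
    · rw [if_neg h, if_neg h, mul_zero, zero_add]
  -- 1 - q as a sum
  have hq1 : 1 - q = ∑ ω : Latent 𝒴 D Z, Q.mass ω * (if ω.2.1 z = d then 0 else (1:ℝ)) := by
    rw [hq]
    nth_rewrite 1 [← Q.total]
    rw [← Finset.sum_sub_distrib]
    refine Finset.sum_congr rfl fun ω _ => ?_
    by_cases h : ω.2.1 z = d
    · rw [if_pos h, if_pos h, mul_one, mul_zero, sub_self]
    · rw [if_neg h, if_neg h, mul_one, mul_zero, sub_zero]
  have hminmax : ∀ ω : Latent 𝒴 D Z,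
      𝒴.min' (Finset.card_pos.mp (by omega)) ≤ ((ω.1 d : ℝ)) ∧
      ((ω.1 d : ℝ)) ≤ 𝒴.max' (Finset.card_pos.mp (by omega)) :=
    fun ω => ⟨Finset.min'_le 𝒴 _ (ω.1 d).2, Finset.le_max' 𝒴 _ (ω.1 d).2⟩
  have hlow : 𝒴.min' (Finset.card_pos.mp (by omega)) * (1 - q) ≤ S2 := by
    rw [hq1, Finset.mul_sum, hS2]
    refine Finset.sum_le_sum fun ω _ => ?_
    by_cases h : ω.2.1 z = d
    · rw [if_pos h, if_pos h, mul_zero, mul_zero]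
    · rw [if_neg h, if_neg h, mul_one]
      have h1 := (hminmax ω).1
      have h2 := Q.nonneg ω
      nlinarith
  have hhigh : S2 ≤ 𝒴.max' (Finset.card_pos.mp (by omega)) * (1 - q) := by
    rw [hq1, Finset.mul_sum, hS2]
    refine Finset.sum_le_sum fun ω _ => ?_
    by_cases h : ω.2.1 z = d
    · rw [if_pos h, if_pos h, mul_zero, mul_zero]
    · rw [if_neg h, if_neg h, mul_one]
      have h1 := (hminmax ω).2
      have h2 := Q.nonneg ω
      nlinarith
  rw [← hzdef] at *
  constructor
  · rw [hbeta, hsump, htheta]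
    linarith
  · rw [hbeta, hsump, htheta]
    linarith
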